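/- Super-exponential decay of the derivative of the mixing profile: if η̃ is a mixing profile for η₊, η₋ ∈ (−1/√3, 1/√3), then for every C > 0 one has sup_{ξ ∈ ℝ} e^{C|ξ|} |η̃′(ξ)| < ∞. -/

import Mathlib

noncomputable section

open Real Filter MeasureTheory Set

/-- The coefficient `a(η) = (1 - 3η²)/(1 - η²)`. -/
def aGL (η : ℝ) : ℝ := (1 - 3 * η ^ 2) / (1 - η ^ 2)

/-- The primitive `A(η) = ∫₀^η a(s) ds`. -/
def AGL (η : ℝ) : ℝ := ∫ s in (0:ℝ)..η, aGL s

/-- A mixing profile for boundary values `ηp` (at `+∞`) and `ηm` (at `-∞`). -/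
def IsMixingProfile (ηp ηm : ℝ) (e : ℝ → ℝ) : Prop :=
  ContDiff ℝ 2 e ∧
  (∀ ξ, e ξ ∈ Set.Ioo (-(1 / Real.sqrt 3)) (1 / Real.sqrt 3)) ∧
  (∀ ξ, deriv (deriv (fun x => AGL (e x))) ξ + ξ / 2 * deriv e ξ = 0) ∧
  Filter.Tendsto e Filter.atTop (nhds ηp) ∧
  Filter.Tendsto e Filter.atBot (nhds ηm)
lemma aGL_contAt {y : ℝ} (hy : y ∈ Ioo (-1:ℝ) 1) : ContinuousAt aGL y := by
  have h : (1 : ℝ) - y ^ 2 ≠ 0 := by nlinarith [hy.1, hy.2]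
  exact (continuousAt_const.sub (continuousAt_const.mul (continuousAt_id.pow 2))).div
    (continuousAt_const.sub (continuousAt_id.pow 2)) h

lemma aGL_contOn : ContinuousOn aGL (Ioo (-1:ℝ) 1) :=
  fun y hy => (aGL_contAt hy).continuousWithinAt

lemma hasDerivAt_AGL {y : ℝ} (hy : y ∈ Ioo (-1:ℝ) 1) : HasDerivAt AGL (aGL y) y := by
  have hsub : uIcc (0:ℝ) y ⊆ Ioo (-1:ℝ) 1 :=
    (Set.ordConnected_Ioo).uIcc_subset (by constructor <;> norm_num) hy
  exact intervalIntegral.integral_hasDerivAt_right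
    ((aGL_contOn.mono hsub).intervalIntegrable)
    (aGL_contOn.stronglyMeasurableAtFilter isOpen_Ioo _ hy)
    (aGL_contAt hy)

lemma aGL_mono {x b : ℝ} (h : x ^ 2 ≤ b ^ 2) (hb : b ^ 2 < 1/3) : aGL b ≤ aGL x := by
  unfold aGL
  rw [div_le_div_iff₀ (by nlinarith) (by nlinarith)]
  nlinarith

lemma aGL_le_one {x : ℝ} (h : x ^ 2 < 1) : aGL x ≤ 1 := by
  unfold aGL
  rw [div_le_one (by nlinarith)]
  nlinarith

lemma aGL_pos {x : ℝ} (h : x ^ 2 < 1/3) : 0 < aGL x :=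
  div_pos (by nlinarith) (by nlinarith)


/-- Super-exponential decay of the derivative of the mixing profile. -/
theorem mixing_profile_deriv_decay
    (ηp ηm : ℝ)
    (hp : ηp ∈ Set.Ioo (-(1 / Real.sqrt 3)) (1 / Real.sqrt 3))
    (hm : ηm ∈ Set.Ioo (-(1 / Real.sqrt 3)) (1 / Real.sqrt 3))
    (e : ℝ → ℝ) (he : IsMixingProfile ηp ηm e) :
    ∀ C > (0:ℝ), ∃ M : ℝ, ∀ ξ : ℝ, Real.exp (C * |ξ|) * |deriv e ξ| ≤ M := by
  obtain ⟨hsm, hrange, hode, htop, hbot⟩ := he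
  set L : ℝ := 1 / Real.sqrt 3 with hLdef
  have hs3 : (1:ℝ) ≤ Real.sqrt 3 := by
    rw [show (1:ℝ) = Real.sqrt 1 by simp]
    exact Real.sqrt_le_sqrt (by norm_num)
  have hs3pos : (0:ℝ) < Real.sqrt 3 := by linarith
  have hLpos : 0 < L := by positivity
  have hL1 : L ≤ 1 := by
    rw [hLdef, div_le_one hs3pos]; exact hs3
  have hLsq : L ^ 2 = 1/3 := by
    rw [hLdef, div_pow, one_pow, Real.sq_sqrt (by norm_num : (3:ℝ) ≥ 0)]
  -- range facts
  have habs : ∀ ξ, |e ξ| < L := fun ξ => abs_lt.mpr ⟨(hrange ξ).1, (hrange ξ).2⟩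
  have hsq3 : ∀ ξ, (e ξ) ^ 2 < 1/3 := fun ξ => by
    rw [← hLsq]; exact sq_lt_sq' (hrange ξ).1 (hrange ξ).2
  have hsq1 : ∀ ξ, (e ξ) ^ 2 < 1 := fun ξ => by nlinarith [hsq3 ξ]
  have he1 : ∀ ξ, e ξ ∈ Ioo (-1:ℝ) 1 := fun ξ => by
    constructor <;> nlinarith [hsq1 ξ, abs_nonneg (e ξ), sq_abs (e ξ)]
  have hapos : ∀ ξ, 0 < aGL (e ξ) := fun ξ => aGL_pos (hsq3 ξ)
  have haub : ∀ ξ, aGL (e ξ) ≤ 1 := fun ξ => aGL_le_one (hsq1 ξ)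
  -- differentiability
  have hdiff : Differentiable ℝ e := hsm.differentiable (by norm_num)
  have hcont : Continuous e := hdiff.continuous
  have hd1 : ContDiff ℝ 1 (deriv e) := by
    have := (contDiff_succ_iff_deriv (n := 1)).mp (by exact_mod_cast hsm)
    exact this.2.2
  have hd2 : Differentiable ℝ (deriv e) := hd1.differentiable one_ne_zero
  -- a ∘ e differentiable and continuous
  have hae_diff : Differentiable ℝ (fun ξ => aGL (e ξ)) := by
    intro ξ
    have hden : (1:ℝ) - (e ξ) ^ 2 ≠ 0 := by nlinarith [hsq1 ξ]
    have : DifferentiableAt ℝ (fun x => (1 - 3 * (e x) ^ 2) / (1 - (e x) ^ 2)) ξ :=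
      ((differentiableAt_const _).sub ((differentiableAt_const _).mul ((hdiff ξ).pow 2))).div
        ((differentiableAt_const _).sub ((hdiff ξ).pow 2)) hden
    exact this
  have hae_cont : Continuous (fun ξ => aGL (e ξ)) := hae_diff.continuous
  -- v and the ODE
  set v : ℝ → ℝ := fun ξ => aGL (e ξ) * deriv e ξ with hvdef
  have hv_diff : Differentiable ℝ v := hae_diff.mul hd2
  have hg' : ∀ ξ, HasDerivAt (fun x => AGL (e x)) (v ξ) ξ := fun ξ =>
    (hasDerivAt_AGL (he1 ξ)).comp ξ (hdiff ξ).hasDerivAt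
  have hderivg : deriv (fun x => AGL (e x)) = v := funext fun ξ => (hg' ξ).deriv
  have hode' : ∀ ξ, deriv v ξ = -(ξ / 2) * deriv e ξ := fun ξ => by
    have h := hode ξ
    rw [hderivg] at h
    linarith
  have he'eq : ∀ ξ, deriv e ξ = v ξ / aGL (e ξ) := fun ξ => by
    show deriv e ξ = aGL (e ξ) * deriv e ξ / aGL (e ξ)
    rw [mul_comm, mul_div_assoc, div_self (hapos ξ).ne', mul_one]
  -- bound on |e|
  obtain ⟨b, hb0, hbL, hbe⟩ : ∃ b, 0 ≤ b ∧ b < L ∧ ∀ ξ, |e ξ| ≤ b := by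
    set c : ℝ := (max |ηp| |ηm| + L) / 2 with hcdef
    have hpL : |ηp| < L := abs_lt.mpr ⟨hp.1, hp.2⟩
    have hmL : |ηm| < L := abs_lt.mpr ⟨hm.1, hm.2⟩
    have hcL : c < L := by
      rw [hcdef]
      have : max |ηp| |ηm| < L := max_lt hpL hmL
      linarith
    have hc0 : 0 ≤ c := by
      have := abs_nonneg ηp
      have := le_max_left |ηp| |ηm|
      rw [hcdef]; linarith
    have h1 : ∀ᶠ ξ in atTop, |e ξ| < c := htop.abs.eventually_lt_const (by
      have := le_max_left |ηp| |ηm|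
      rw [hcdef]; linarith)
    have h2 : ∀ᶠ ξ in atBot, |e ξ| < c := hbot.abs.eventually_lt_const (by
      have := le_max_right |ηp| |ηm|
      rw [hcdef]; linarith)
    obtain ⟨ξ₁, hξ₁⟩ := eventually_atTop.mp h1
    obtain ⟨ξ₂, hξ₂⟩ := eventually_atBot.mp h2
    by_cases hne : (Icc ξ₂ ξ₁).Nonempty
    · obtain ⟨z, hz, hzmax⟩ := isCompact_Icc.exists_isMaxOn hne
        (hcont.abs.continuousOn)
      refine ⟨max c |e z|, le_trans hc0 (le_max_left _ _), max_lt hcL (habs z), fun ξ => ?_⟩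
      rcases le_or_gt ξ₁ ξ with h | h
      · exact le_trans (hξ₁ ξ h).le (le_max_left _ _)
      rcases le_or_gt ξ ξ₂ with h' | h'
      · exact le_trans (hξ₂ ξ h').le (le_max_left _ _)
      · exact le_trans (hzmax ⟨h'.le, h.le⟩) (le_max_right _ _)
    · refine ⟨c, hc0, hcL, fun ξ => ?_⟩
      rcases le_or_gt ξ₁ ξ with h | h
      · exact (hξ₁ ξ h).le
      rcases le_or_gt ξ ξ₂ with h' | h'
      · exact (hξ₂ ξ h').le
      · exact absurd ⟨ξ, h'.le, h.le⟩ hne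
  have hbsq : b ^ 2 < 1/3 := by rw [← hLsq]; nlinarith
  set α : ℝ := aGL b with hαdef
  have hαpos : 0 < α := aGL_pos hbsq
  have halb : ∀ ξ, α ≤ aGL (e ξ) := fun ξ =>
    aGL_mono (by nlinarith [hbe ξ, abs_nonneg (e ξ), sq_abs (e ξ)]) hbsq
  -- the integrating factor
  set φ : ℝ → ℝ := fun s => s / (2 * aGL (e s)) with hφdef
  have hφcont : Continuous φ :=
    continuous_id.div (continuous_const.mul hae_cont) (fun s => (mul_pos two_pos (hapos s)).ne')
  set B : ℝ → ℝ := fun ξ => ∫ s in (0:ℝ)..ξ, φ s with hBdef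
  have hB' : ∀ ξ, HasDerivAt B (φ ξ) ξ := fun ξ =>
    intervalIntegral.integral_hasDerivAt_right (hφcont.intervalIntegrable 0 ξ)
      (hφcont.stronglyMeasurableAtFilter _ _) hφcont.continuousAt
  set w : ℝ → ℝ := fun ξ => v ξ * Real.exp (B ξ) with hwdef
  have hw' : ∀ ξ, HasDerivAt w 0 ξ := fun ξ => by
    have h1 : HasDerivAt v (deriv v ξ) ξ := (hv_diff ξ).hasDerivAt
    have h2 : HasDerivAt (fun x => Real.exp (B x)) (Real.exp (B ξ) * φ ξ) ξ := (hB' ξ).exp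
    have h3 : HasDerivAt w (deriv v ξ * Real.exp (B ξ) + v ξ * (Real.exp (B ξ) * φ ξ)) ξ :=
      h1.mul h2
    convert h3 using 1
    rw [hode' ξ, he'eq ξ]
    have haξ := (hapos ξ).ne'
    show (0:ℝ) = -(ξ/2) * (v ξ / aGL (e ξ)) * Real.exp (B ξ)
      + v ξ * (Real.exp (B ξ) * (ξ / (2 * aGL (e ξ))))
    field_simp
    ring
  have hwconst : ∀ ξ, w ξ = w 0 := fun ξ =>
    is_const_of_deriv_eq_zero (fun x => (hw' x).differentiableAt) (fun x => (hw' x).deriv) ξ 0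
  have hvabs : ∀ ξ, |v ξ| = |w 0| * Real.exp (-(B ξ)) := fun ξ => by
    have h : v ξ * Real.exp (B ξ) = w 0 := hwconst ξ
    have h2 : v ξ = w 0 * Real.exp (-(B ξ)) := by
      rw [← h, mul_assoc, ← Real.exp_add]
      simp
    rw [h2, abs_mul, abs_of_pos (Real.exp_pos _)]
  -- lower bound on B
  have hBlb : ∀ ξ, ξ ^ 2 / 4 ≤ B ξ := by
    intro ξ
    rcases le_or_gt 0 ξ with hξ | hξ
    · have hmono : ∀ s ∈ Icc (0:ℝ) ξ, s / 2 ≤ φ s := by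
        intro s hs
        rw [hφdef]
        have h1 : 0 < 2 * aGL (e s) := mul_pos two_pos (hapos s)
        rw [div_le_div_iff₀ (by norm_num) h1]
        nlinarith [haub s, hs.1]
      have := intervalIntegral.integral_mono_on (μ := volume) hξ
        ((continuous_id.div_const 2).intervalIntegrable 0 ξ)
        (hφcont.intervalIntegrable 0 ξ) hmono
      have hid : (∫ s in (0:ℝ)..ξ, s / 2) = ξ ^ 2 / 4 := by
        rw [intervalIntegral.integral_div, integral_id]
        ring
      rw [hBdef]
      calc ξ ^ 2 / 4 = ∫ s in (0:ℝ)..ξ, s / 2 := hid.symm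
        _ ≤ ∫ s in (0:ℝ)..ξ, φ s := this
    · have hmono : ∀ s ∈ Icc ξ (0:ℝ), φ s ≤ s / 2 := by
        intro s hs
        rw [hφdef]
        have h1 : 0 < 2 * aGL (e s) := mul_pos two_pos (hapos s)
        rw [div_le_div_iff₀ h1 (by norm_num)]
        nlinarith [haub s, hs.2]
      have : (∫ s in ξ..(0:ℝ), φ s) ≤ ∫ s in ξ..(0:ℝ), s / 2 :=
        intervalIntegral.integral_mono_on (μ := volume) hξ.le
          (hφcont.intervalIntegrable ξ 0)
          ((continuous_id.div_const 2).intervalIntegrable ξ 0) hmono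
      have hid : (∫ s in ξ..(0:ℝ), s / 2) = -(ξ ^ 2) / 4 := by
        rw [intervalIntegral.integral_div, integral_id]
        ring
      have hsymm : B ξ = -∫ s in ξ..(0:ℝ), φ s := by
        show (∫ s in (0:ℝ)..ξ, φ s) = -∫ s in ξ..(0:ℝ), φ s
        exact intervalIntegral.integral_symm ξ 0
      rw [hsymm]
      rw [hid] at this
      linarith
  -- conclusion
  intro C hC
  refine ⟨|w 0| / α * Real.exp (C ^ 2), fun ξ => ?_⟩
  have h1 : |deriv e ξ| ≤ |v ξ| / α := by
    rw [he'eq ξ, abs_div, abs_of_pos (hapos ξ)]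
    exact div_le_div_of_nonneg_left (abs_nonneg _) hαpos (halb ξ)
  have h2 : Real.exp (C * |ξ| - B ξ) ≤ Real.exp (C ^ 2) := by
    apply Real.exp_le_exp.mpr
    nlinarith [hBlb ξ, sq_abs ξ, sq_nonneg (|ξ| / 2 - C), abs_nonneg ξ]
  calc Real.exp (C * |ξ|) * |deriv e ξ|
      ≤ Real.exp (C * |ξ|) * (|v ξ| / α) := by
        exact mul_le_mul_of_nonneg_left h1 (Real.exp_pos _).le
    _ = |w 0| / α * (Real.exp (C * |ξ|) * Real.exp (-(B ξ))) := by
        rw [hvabs ξ]; field_simp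
    _ = |w 0| / α * Real.exp (C * |ξ| - B ξ) := by
        rw [← Real.exp_add]; ring_nf
    _ ≤ |w 0| / α * Real.exp (C ^ 2) := by
        apply mul_le_mul_of_nonneg_left h2
        positivity
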